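/- Let V be a graded vector space, φ^i generating fields satisfying Conditions 1–6, and Y_V the vertex operator map of the first construction. Then for all a ∈ ℂ^×, v ∈ V, v' ∈ V', and a homogeneous element u = φ^{i₁}_{n₁}⋯φ^{i_k}_{n_k}1: ⟨v', a^{L(0)} Y_V(u, z) a^{-L(0)} v⟩ = ⟨v', Y_V(a^{L(0)}u, az) v⟩, i.e., the L(0)-conjugation formula holds for Y_V. -/

import Mathlib

/- STATEMENT 10: the L(0)-conjugation formula
⟨v', a^{L(0)} Y_V(u, z) a^{-L(0)} v⟩ = ⟨v', Y_V(a^{L(0)}u, az) v⟩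
for the vertex operator map of the first construction, where
u = φ^{i₁}_{n₁}⋯φ^{i_k}_{n_k}1 is homogeneous of weight
wt u = Σ_j (wt φ^{i_j} - n_j - 1), a^{L(0)} acts as a^n on the degree-n
subspace, and v, v' are homogeneous.  Setup as in Statements 7–9. -/

open Finset Complex

def RatWithDiagPoles (m : ℕ) (R : (Fin m → ℂ) → ℂ) : Prop :=
  ∃ (P : MvPolynomial (Fin m) ℂ) (r : Fin m → ℕ) (s : Fin m → Fin m → ℕ),
    ∀ x : Fin m → ℂ,
      R x = MvPolynomial.eval x P /
        ((∏ i, x i ^ r i) *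
          ∏ pq ∈ Finset.univ.filter (fun pq : Fin m × Fin m => pq.1 < pq.2),
            (x pq.1 - x pq.2) ^ s pq.1 pq.2)

noncomputable def iterRes : (k : ℕ) → ((Fin k → ℂ) → ℂ) → (Fin k → ℝ) → ℂ
  | 0, f, _ => f (fun i => i.elim0)
  | (k + 1), f, r =>
      (2 * Real.pi * Complex.I)⁻¹ *
        (∮ w in C(0, r 0), iterRes k (fun ξ => f (Fin.cons w ξ)) (fun i => r i.succ))

noncomputable def pairQ {V : Type} [AddCommGroup V] [Module ℂ V]
    (v' : Module.Dual ℂ V) (w : ℚ → V) : ℂ := ∑' h : ℚ, v' (w h)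

def GradedDualQ {V : Type} [AddCommGroup V] [Module ℂ V]
    (A : ℚ → Submodule ℂ V) (v' : Module.Dual ℂ V) : Prop :=
  {h : ℚ | ∃ x ∈ A h, v' x ≠ 0}.Finite

section Setup

variable {V : Type} [AddCommGroup V] [Module ℂ V] {I : Type}

def monApply (c : I → ℤ → V →ₗ[ℂ] V) (L : List (I × ℤ)) (v : V) : V :=
  L.foldr (fun p w => c p.1 p.2 w) v

def MatchesR (c : I → ℤ → V →ₗ[ℂ] V) (v' : Module.Dual ℂ V) (v : V)
    {k : ℕ} (is : Fin k → I) (F : (Fin k → ℂ) → ℂ) : Prop :=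
  RatWithDiagPoles k F ∧
    ∀ z : Fin k → ℂ, (∀ a b : Fin k, a < b → ‖z b‖ < ‖z a‖) → (∀ a, z a ≠ 0) →
      Summable (fun n : Fin k → ℤ =>
        ‖v' (monApply c (List.ofFn fun j => (is j, n j)) v) *
          ∏ j : Fin k, z j ^ (-(n j) - 1 : ℤ)‖) ∧
      (∑' n : Fin k → ℤ,
        v' (monApply c (List.ofFn fun j => (is j, n j)) v) *
          ∏ j : Fin k, z j ^ (-(n j) - 1 : ℤ)) = F z

end Setup


section Aux

open Complex intervalIntegral

lemma integral_cexp_I : (∫ x : ℝ in (0:ℝ)..2 * Real.pi, Complex.exp (x * I)) = 0 := by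
  have h : ∀ x : ℝ, HasDerivAt (fun y : ℝ => -I * Complex.exp (y * I)) (Complex.exp (x * I)) x := by
    intro x
    have h1 : HasDerivAt (fun y : ℝ => (y : ℂ) * I) I x := by
      simpa using (Complex.ofRealCLM.hasDerivAt (x := x)).mul_const I
    have h2 := (Complex.hasDerivAt_exp (x * I)).comp x h1
    have h3 := h2.const_mul (-I)
    refine h3.congr_deriv ?_
    rw [show -I * (cexp (↑x * I) * I) = -(I^2) * cexp (↑x*I) by ring, Complex.I_sq]
    ring
  rw [intervalIntegral.integral_eq_sub_of_hasDerivAt (fun x _ => h x)]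
  · push_cast
    rw [Complex.exp_two_pi_mul_I]
    simp
  · apply Continuous.intervalIntegrable
    continuity

lemma circle_scale (f : ℂ → ℂ) (b : ℂ) (r : ℝ) :
    (∮ w in C(0, r), f (b * w)) = b⁻¹ * ∮ w in C(0, ‖b‖ * r), f w := by
  rcases eq_or_ne b 0 with rb | hb
  · subst rb
    simp [circleIntegral, circleMap, integral_cexp_I]
  set R := ‖b‖ * r with hR
  set g : ℝ → ℂ := fun θ => deriv (circleMap 0 R) θ • f (circleMap 0 R θ) with hg
  have key : ∀ θ : ℝ, circleMap 0 R (θ + Complex.arg b) = b * circleMap 0 r θ := by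
    intro θ
    have : circleMap 0 R (θ + Complex.arg b)
        = (((‖b‖ : ℝ) : ℂ) * Complex.exp (b.arg * I)) * circleMap 0 r θ := by
      simp only [circleMap, zero_add, hR]
      push_cast
      rw [add_mul, Complex.exp_add]
      ring
    rw [this, Complex.norm_mul_exp_arg_mul_I]
  have per : Function.Periodic g (2 * Real.pi) := by
    intro θ
    simp only [hg, deriv_circleMap]
    rw [periodic_circleMap _ _ θ]
  calc (∮ w in C(0, r), f (b * w))
      = ∫ θ in (0:ℝ)..2 * Real.pi, b⁻¹ * g (θ + Complex.arg b) := by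
        rw [circleIntegral]
        congr 1
        funext θ
        simp only [hg, deriv_circleMap, smul_eq_mul, key θ]
        field_simp
    _ = b⁻¹ * ∫ θ in (0:ℝ)..2 * Real.pi, g (θ + Complex.arg b) := by
        rw [intervalIntegral.integral_const_mul]
    _ = b⁻¹ * ∮ w in C(0, R), f w := by
        congr 1
        rw [intervalIntegral.integral_comp_add_right g]
        rw [circleIntegral]
        have := per.intervalIntegral_add_eq (Complex.arg b) 0
        simpa [hg, zero_add, add_comm] using this

lemma iterRes_congr (k : ℕ) (f g : (Fin k → ℂ) → ℂ) (rr : Fin k → ℝ)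
    (h : ∀ x, f x = g x) : iterRes k f rr = iterRes k g rr := by
  rw [funext h]

lemma iterRes_zero : ∀ (k : ℕ) (rr : Fin k → ℝ), iterRes k (fun _ => (0:ℂ)) rr = 0 := by
  intro k
  induction k with
  | zero => intro rr; simp [iterRes]
  | succ k ih =>
      intro rr
      simp only [iterRes]
      rw [show (fun w : ℂ => iterRes k (fun ξ => (fun _ : Fin (k+1) → ℂ => (0:ℂ)) (Fin.cons w ξ)) (fun i => rr i.succ))
          = (fun _ : ℂ => (0:ℂ)) from funext fun w => ih _]
      simp [circleIntegral]

lemma iterRes_const_mul (a : ℂ) : ∀ (k : ℕ) (f : (Fin k → ℂ) → ℂ) (rr : Fin k → ℝ),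
    iterRes k (fun ξ => a * f ξ) rr = a * iterRes k f rr := by
  intro k
  induction k with
  | zero => intro f rr; simp [iterRes]
  | succ k ih =>
      intro f rr
      simp only [iterRes]
      rw [show (fun w => iterRes k (fun ξ => a * f (Fin.cons w ξ)) (fun i => rr i.succ))
          = (fun w => a * iterRes k (fun ξ => f (Fin.cons w ξ)) (fun i => rr i.succ)) from
          funext fun w => ih _ _]
      rw [circleIntegral.integral_const_mul]
      ring

lemma iterRes_scale (b : ℂ) : ∀ (k : ℕ) (f : (Fin k → ℂ) → ℂ) (rr : Fin k → ℝ),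
    iterRes k (fun ξ => f (fun j => b * ξ j)) rr
      = b⁻¹ ^ k * iterRes k f (fun j => ‖b‖ * rr j) := by
  intro k
  induction k with
  | zero =>
      intro f rr
      simp only [iterRes, pow_zero, one_mul]
      congr 1
      funext j
      exact j.elim0
  | succ k ih =>
      intro f rr
      simp only [iterRes]
      have hcons : ∀ (w : ℂ) (ξ : Fin k → ℂ),
          (fun j : Fin (k+1) => b * (Fin.cons w ξ : Fin (k+1) → ℂ) j)
            = (Fin.cons (b * w) (fun j => b * ξ j) : Fin (k+1) → ℂ) := by
        intro w ξ
        funext j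
        cases j using Fin.cases <;> simp
      have step : (fun w : ℂ => iterRes k
            (fun ξ : Fin k → ℂ => f (fun j : Fin (k+1) => b * (Fin.cons w ξ : Fin (k+1) → ℂ) j))
            (fun i => rr i.succ))
          = (fun w : ℂ => b⁻¹ ^ k * iterRes k (fun η => f (Fin.cons (b * w) η))
              (fun i => ‖b‖ * rr i.succ)) := by
        funext w
        rw [show (fun ξ : Fin k → ℂ => f (fun j : Fin (k+1) => b * (Fin.cons w ξ : Fin (k+1) → ℂ) j))
            = (fun ξ : Fin k → ℂ => f (Fin.cons (b * w) (fun j => b * ξ j))) from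
            funext fun ξ => by rw [hcons]]
        exact ih (fun η => f (Fin.cons (b * w) η)) (fun i => rr i.succ)
      rw [step, circleIntegral.integral_const_mul,
        circle_scale (fun u => iterRes k (fun η => f (Fin.cons u η))
          (fun i => ‖b‖ * rr i.succ)) b (rr 0)]
      ring

lemma mvpoly_analytic {k : ℕ} (P : MvPolynomial (Fin k) ℂ) :
    AnalyticOnNhd ℂ (fun x : Fin k → ℂ => MvPolynomial.eval x P) Set.univ := by
  induction P using MvPolynomial.induction_on with
  | C a => simpa using analyticOnNhd_const (v := a)
  | add p q hp hq => simp only [MvPolynomial.eval_add]; exact hp.add hq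
  | mul_X p n hp =>
      have hX : AnalyticOnNhd ℂ (fun x : Fin k → ℂ => x n) Set.univ :=
        fun x _ => (ContinuousLinearMap.proj n : (Fin k → ℂ) →L[ℂ] ℂ).analyticAt x
      simpa [MvPolynomial.eval_mul] using hp.mul hX

lemma zero_ext {k : ℕ} (g : (Fin k → ℂ) → ℂ)
    (hg : AnalyticOnNhd ℂ g Set.univ) (W : Set (Fin k → ℂ)) (hW : IsOpen W)
    (x₀ : Fin k → ℂ) (hx₀ : x₀ ∈ W) (h : ∀ x ∈ W, g x = 0) : ∀ x, g x = 0 := by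
  have hpre : IsPreconnected (Set.univ : Set (Fin k → ℂ)) :=
    (convex_univ (𝕜 := ℝ)).isPreconnected
  have hev : g =ᶠ[nhds x₀] 0 :=
    Filter.eventually_of_mem (hW.mem_nhds hx₀) h
  have := hg.eqOn_zero_of_preconnected_of_eventuallyEq_zero hpre (Set.mem_univ x₀) hev
  intro x
  exact this (Set.mem_univ x)

lemma prod_zpow_eq {ι : Type*} (a : ℂ) (ha : a ≠ 0) (s : Finset ι) (e : ι → ℤ) :
    ∏ j ∈ s, a ^ e j = a ^ ∑ j ∈ s, e j := by
  classical
  induction s using Finset.induction with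
  | empty => simp
  | insert _ _ h ih => rw [Finset.prod_insert h, Finset.sum_insert h, ih, ← zpow_add₀ ha]

end Aux

section Aux2

variable {V : Type} [AddCommGroup V] [Module ℂ V] {I : Type}

lemma mon_deg (A : ℚ → Submodule ℂ V) (wt : I → ℤ) (c : I → ℤ → V →ₗ[ℂ] V)
    (hcwt : ∀ (i : I) (n : ℤ) (m : ℚ) (v : V), v ∈ A m →
      c i n v ∈ A (m + (wt i : ℚ) - n - 1)) :
    ∀ (L : List (I × ℤ)) (m : ℚ) (v : V), v ∈ A m →
      monApply c L v ∈ A (m + (L.map fun p => (wt p.1 : ℚ) - p.2 - 1).sum) := by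
  intro L
  induction L with
  | nil => intro m v hv; simpa [monApply] using hv
  | cons p L ih =>
      intro m v hv
      have h1 := hcwt p.1 p.2 _ _ (ih m v hv)
      have : m + ((p :: L).map fun q => (wt q.1 : ℚ) - q.2 - 1).sum
          = m + (L.map fun q => (wt q.1 : ℚ) - q.2 - 1).sum + (wt p.1 : ℚ) - p.2 - 1 := by
        simp only [List.map_cons, List.sum_cons]
        ring
      rw [this]
      simpa [monApply] using h1

end Aux2

theorem stmt10
    (V : Type) [AddCommGroup V] [Module ℂ V]
    (A : ℚ → Submodule ℂ V)
    (hInt : DirectSum.IsInternal fun n => A n)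
    (hfin : ∀ n : ℚ, FiniteDimensional ℂ (A n))
    (N₀ : ℚ) (hbdd : ∀ n < N₀, A n = ⊥)
    (hhalf : ∀ n : ℚ, A n ≠ ⊥ → ((2 : ℚ) * n).den = 1)
    (I : Type)
    (φ : I → ℂ → V →ₗ[ℂ] (ℚ → V))
    (hφA : ∀ (i : I) (z : ℂ) (v : V) (n : ℚ), (φ i z v) n ∈ A n)
    (wt : I → ℤ) (par : I → ℕ) (hpar : ∀ i, par i ≤ 1)
    (vac : V) (hvac : vac ∈ A 0)
    (c : I → ℤ → V →ₗ[ℂ] V)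
    (hcwt : ∀ (i : I) (n : ℤ) (m : ℚ) (v : V), v ∈ A m →
      c i n v ∈ A (m + (wt i : ℚ) - n - 1))
    (hcoeff : ∀ (i : I) (z : ℂ), z ≠ 0 → ∀ (m : ℚ) (v : V), v ∈ A m → ∀ n : ℤ,
      (φ i z v) ((wt i : ℚ) - (n : ℚ) - 1 + m) = (z ^ (-n - 1 : ℤ)) • c i n v)
    (hsupp : ∀ (i : I) (z : ℂ), z ≠ 0 → ∀ (m : ℚ) (v : V), v ∈ A m → ∀ d : ℚ,
      (∀ n : ℤ, d ≠ (wt i : ℚ) - (n : ℚ) - 1 + m) → (φ i z v) d = 0)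
    (Lm1 : V →ₗ[ℂ] V) (hLm1vac : Lm1 vac = 0)
    (hbrc : ∀ (i : I) (n : ℤ) (v : V),
      Lm1 (c i n v) - c i n (Lm1 v) = (-(n : ℂ)) • c i (n - 1) v)
    (hcre : ∀ (i : I) (n : ℤ), 0 ≤ n → c i n vac = 0)
    (hparity : ∀ i : I, (par i = 0 ↔ ((wt i : ℚ)).den = 1))
    (hspan : Submodule.span ℂ
      {x : V | ∃ L : List (I × ℤ), x = monApply c L vac} = ⊤)
    (hrat : ∀ (v' : Module.Dual ℂ V), GradedDualQ A v' →
      ∀ (v : V) (k : ℕ) (is : Fin k → I), ∃ F, MatchesR c v' v is F)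
    (hcomm : ∀ (v' : Module.Dual ℂ V), GradedDualQ A v' →
      ∀ (v : V) (i₁ i₂ : I) (F₁ F₂ : (Fin 2 → ℂ) → ℂ),
        MatchesR c v' v ![i₁, i₂] F₁ → MatchesR c v' v ![i₂, i₁] F₂ →
        ∀ z₁ z₂ : ℂ, z₁ ≠ 0 → z₂ ≠ 0 → z₁ ≠ z₂ →
          F₁ ![z₁, z₂] = ((-1 : ℂ) ^ (par i₁ * par i₂)) • F₂ ![z₂, z₁])
    -- Y is the vertex operator map of the first construction, given by the
    -- iterated residue formula (3.7)
    (Y : ℂ → V →ₗ[ℂ] V →ₗ[ℂ] (ℚ → V))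
    (hYdef : ∀ (v' : Module.Dual ℂ V), GradedDualQ A v' →
      ∀ (v : V) (k : ℕ) (is : Fin k → I) (ms : Fin k → ℤ)
        (F : (Fin k → ℂ) → ℂ), MatchesR c v' v is F →
        ∀ z : ℂ, z ≠ 0 →
          ∃ ρ > (0 : ℝ), ∀ rr : Fin k → ℝ,
            (∀ j, 0 < rr j) → (∀ a b : Fin k, a < b → rr b < rr a) →
            (∀ j, rr j < ρ) →
            pairQ v' (Y z (monApply c (List.ofFn fun j => (is j, ms j)) vac) v)
              = iterRes k (fun ξ => (∏ j : Fin k, ξ j ^ (ms j)) *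
                  F (fun j => ξ j + z)) rr) :
    -- L(0)-conjugation formula for Y
    ∀ (a z : ℂ), a ≠ 0 → z ≠ 0 →
      ∀ (v' : Module.Dual ℂ V) (d : ℚ),
        (∀ e : ℚ, e ≠ d → ∀ x ∈ A e, v' x = 0) →
        ∀ (m : ℚ) (v : V), v ∈ A m →
          ∀ (k : ℕ) (is : Fin k → I) (ms : Fin k → ℤ),
            (a ^ (d : ℂ)) * (a ^ (m : ℂ))⁻¹ *
              pairQ v' (Y z (monApply c (List.ofFn fun j => (is j, ms j)) vac) v)
            = (a ^ (∑ j : Fin k, (wt (is j) - ms j - 1)) ) *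
              pairQ v' (Y (a * z) (monApply c (List.ofFn fun j => (is j, ms j)) vac) v) := by
  intro a z ha hz v' d hv' m v hm k is ms
  classical
  -- v' is in the graded dual
  have hgd : GradedDualQ A v' := by
    apply Set.Finite.subset (Set.finite_singleton d)
    intro h hh
    simp only [Set.mem_setOf_eq] at hh
    obtain ⟨x, hx, hvx⟩ := hh
    simp only [Set.mem_singleton_iff]
    by_contra hne
    exact hvx (hv' h hne x hx)
  obtain ⟨F, hF⟩ := hrat v' hgd v k is
  obtain ⟨P, r, s, hPrs⟩ := hF.1
  have hFsum := hF.2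
  set D : (Fin k → ℂ) → ℂ := fun x =>
    (∏ i, x i ^ r i) *
      ∏ pq ∈ Finset.univ.filter (fun pq : Fin k × Fin k => pq.1 < pq.2),
        (x pq.1 - x pq.2) ^ s pq.1 pq.2 with hDdef
  set N : ℕ := (∑ i, r i) +
      ∑ pq ∈ Finset.univ.filter (fun pq : Fin k × Fin k => pq.1 < pq.2), s pq.1 pq.2 with hNdef
  have hFval : ∀ x, F x = MvPolynomial.eval x P / D x := fun x => hPrs x
  have hDscale : ∀ (b : ℂ) (x : Fin k → ℂ), D (fun j => b * x j) = b ^ N * D x := by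
    intro b x
    have h1 : (∏ i, (b * x i) ^ r i) = (∏ i, b ^ r i) * ∏ i, x i ^ r i := by
      rw [← Finset.prod_mul_distrib]
      exact Finset.prod_congr rfl fun i _ => mul_pow _ _ _
    have h2 : (∏ pq ∈ Finset.univ.filter (fun pq : Fin k × Fin k => pq.1 < pq.2),
          ((b * x pq.1) - (b * x pq.2)) ^ s pq.1 pq.2)
        = (∏ pq ∈ Finset.univ.filter (fun pq : Fin k × Fin k => pq.1 < pq.2), b ^ s pq.1 pq.2) *
          ∏ pq ∈ Finset.univ.filter (fun pq : Fin k × Fin k => pq.1 < pq.2),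
            (x pq.1 - x pq.2) ^ s pq.1 pq.2 := by
      rw [← Finset.prod_mul_distrib]
      refine Finset.prod_congr rfl fun pq _ => ?_
      rw [← mul_sub, mul_pow]
    show (∏ i, (b * x i) ^ r i) * _ = _
    rw [h1, h2, Finset.prod_pow_eq_pow_sum, Finset.prod_pow_eq_pow_sum, hNdef, pow_add, hDdef]
    ring
  have hmon : ∀ n : Fin k → ℤ, monApply c (List.ofFn fun j => (is j, n j)) v
      ∈ A (m + ∑ j, ((wt (is j) : ℚ) - n j - 1)) := by
    intro n
    have h := mon_deg A wt c hcwt (List.ofFn fun j => (is j, n j)) m v hm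
    have he : ((List.ofFn fun j => (is j, n j)).map fun p => (wt p.1 : ℚ) - p.2 - 1).sum
        = ∑ j, ((wt (is j) : ℚ) - n j - 1) := by
      rw [List.map_ofFn, List.sum_ofFn]
      rfl
    rwa [he] at h
  have hdn : ∀ n : Fin k → ℤ, v' (monApply c (List.ofFn fun j => (is j, n j)) v) ≠ 0 →
      m + ∑ j, ((wt (is j) : ℚ) - n j - 1) = d := by
    intro n hvn
    by_contra hne
    exact hvn (hv' _ hne _ (hmon n))
  have hsplit : ∀ n : Fin k → ℤ, (∑ j, ((wt (is j) : ℚ) - (n j : ℚ) - 1))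
      = (∑ j, (wt (is j) : ℚ)) + ∑ j, (-(n j : ℚ) - 1) := by
    intro n
    rw [← Finset.sum_add_distrib]
    exact Finset.sum_congr rfl fun _ _ => by ring
  -- base point and open set for analytic continuation
  set x₀ : Fin k → ℂ := fun j => (((2:ℝ)⁻¹ ^ ((j : ℕ) + 1) : ℝ) : ℂ) with hx₀def
  have hx₀norm : ∀ j : Fin k, ‖x₀ j‖ = (2:ℝ)⁻¹ ^ ((j : ℕ) + 1) := by
    intro j
    simp only [hx₀def, Complex.norm_real, Real.norm_eq_abs]
    exact abs_of_pos (by positivity)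
  have hx₀1 : ∀ p q : Fin k, p < q → ‖x₀ q‖ < ‖x₀ p‖ := by
    intro p q hpq
    rw [hx₀norm, hx₀norm]
    exact pow_lt_pow_right_of_lt_one₀ (by norm_num) (by norm_num)
      (Nat.succ_lt_succ (Fin.lt_def.mp hpq))
  have hx₀2 : ∀ j, x₀ j ≠ 0 := by
    intro j
    simp only [hx₀def]
    exact_mod_cast (by positivity : ((2:ℝ)⁻¹ ^ ((j:ℕ)+1)) ≠ 0)
  have hx₀ne : ∀ p q : Fin k, p < q → x₀ p ≠ x₀ q := by
    intro p q hpq h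
    exact absurd (h ▸ hx₀1 p q hpq) (lt_irrefl _)
  have hx₀D : D x₀ ≠ 0 := by
    apply mul_ne_zero
    · rw [Finset.prod_ne_zero_iff]
      intro i _
      exact pow_ne_zero _ (hx₀2 i)
    · rw [Finset.prod_ne_zero_iff]
      intro pq hpq
      simp only [Finset.mem_filter] at hpq
      exact pow_ne_zero _ (sub_ne_zero.mpr (hx₀ne pq.1 pq.2 hpq.2))
  set W : Set (Fin k → ℂ) := {x | (∀ p q : Fin k, p < q → ‖x q‖ < ‖x p‖) ∧
      (∀ j, x j ≠ 0) ∧ D x ≠ 0} with hWdef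
  have hx₀W : x₀ ∈ W := ⟨hx₀1, hx₀2, hx₀D⟩
  have hDcont : Continuous D := by
    apply Continuous.mul
    · exact continuous_finset_prod _ fun i _ => (continuous_apply i).pow _
    · exact continuous_finset_prod _ fun pq _ =>
        ((continuous_apply pq.1).sub (continuous_apply pq.2)).pow _
  have hWopen : IsOpen W := by
    have e1 : IsOpen {x : Fin k → ℂ | ∀ p q : Fin k, p < q → ‖x q‖ < ‖x p‖} := by
      have : {x : Fin k → ℂ | ∀ p q : Fin k, p < q → ‖x q‖ < ‖x p‖}
          = ⋂ pq : Fin k × Fin k, {x | pq.1 < pq.2 → ‖x pq.2‖ < ‖x pq.1‖} := by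
        ext x
        simp only [Set.mem_setOf_eq, Set.mem_iInter, Prod.forall]
      rw [this]
      apply isOpen_iInter_of_finite
      intro pq
      by_cases h : pq.1 < pq.2
      · simp only [h, forall_true_left]
        exact isOpen_lt ((continuous_apply pq.2).norm) ((continuous_apply pq.1).norm)
      · have he : {x : Fin k → ℂ | pq.1 < pq.2 → ‖x pq.2‖ < ‖x pq.1‖} = Set.univ := by
          ext x
          simp [h]
        rw [he]
        exact isOpen_univ
    have e2 : IsOpen {x : Fin k → ℂ | ∀ j, x j ≠ 0} := by
      have he : {x : Fin k → ℂ | ∀ j, x j ≠ 0} = ⋂ j, (fun x : Fin k → ℂ => x j) ⁻¹' {0}ᶜ := by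
        ext x
        simp
      rw [he]
      exact isOpen_iInter_of_finite fun j => isOpen_compl_singleton.preimage (continuous_apply j)
    have e3 : IsOpen {x : Fin k → ℂ | D x ≠ 0} := by
      have he : {x : Fin k → ℂ | D x ≠ 0} = D ⁻¹' {0}ᶜ := by
        ext x
        simp
      rw [he]
      exact isOpen_compl_singleton.preimage hDcont
    have hwe : W = {x : Fin k → ℂ | ∀ p q : Fin k, p < q → ‖x q‖ < ‖x p‖} ∩
        ({x | ∀ j, x j ≠ 0} ∩ {x | D x ≠ 0}) := by
      ext x
      exact Iff.rfl
    rw [hwe]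
    exact e1.inter (e2.inter e3)
  -- case split on integrality
  by_cases hT : ∃ t : ℤ, (t : ℚ) = d - m - ∑ j, (wt (is j) : ℚ)
  · obtain ⟨t, ht⟩ := hT
    -- Step 1: homogeneity of F on the domain of convergence
    have claim1 : ∀ x : Fin k → ℂ, (∀ p q : Fin k, p < q → ‖x q‖ < ‖x p‖) →
        (∀ j, x j ≠ 0) → F (fun j => a * x j) = a ^ t * F x := by
      intro x hx1 hx2
      have hax1 : ∀ p q : Fin k, p < q → ‖(fun j => a * x j) q‖ < ‖(fun j => a * x j) p‖ := by
        intro p q hpq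
        simp only [norm_mul]
        exact mul_lt_mul_of_pos_left (hx1 p q hpq) (norm_pos_iff.mpr ha)
      have hax2 : ∀ j, a * x j ≠ 0 := fun j => mul_ne_zero ha (hx2 j)
      obtain ⟨_, hsum_x⟩ := hFsum x hx1 hx2
      obtain ⟨_, hsum_ax⟩ := hFsum (fun j => a * x j) hax1 hax2
      rw [← hsum_ax, ← hsum_x, ← tsum_mul_left]
      apply tsum_congr
      intro n
      by_cases hvn : v' (monApply c (List.ofFn fun j => (is j, n j)) v) = 0
      · simp [hvn]
      · have htn : t = ∑ j, (-(n j) - 1) := by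
          have hq : ((∑ j, (-(n j) - 1) : ℤ) : ℚ) = d - m - ∑ j, (wt (is j) : ℚ) := by
            push_cast
            have h1 := hdn n hvn
            have h2 := hsplit n
            have h3 : ∑ j, (-(n j : ℚ) - 1) = ∑ j, (-((n j : ℤ) : ℚ) - 1) := by push_cast; ring_nf
            linarith [h1, h2]
          have h4 := hq.trans ht.symm
          exact_mod_cast h4.symm
        have hprod : ∏ j, (a * x j) ^ (-(n j) - 1 : ℤ)
            = a ^ t * ∏ j, (x j) ^ (-(n j) - 1 : ℤ) := by
          have hc : ∀ j ∈ Finset.univ, (a * x j) ^ (-(n j) - 1 : ℤ)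
              = a ^ (-(n j) - 1 : ℤ) * (x j) ^ (-(n j) - 1 : ℤ) := fun j _ => mul_zpow _ _ _
          rw [Finset.prod_congr rfl hc, Finset.prod_mul_distrib, prod_zpow_eq a ha, ← htn]
        rw [hprod]
        ring
    -- Step 2: homogeneity of F everywhere, by analytic continuation
    have claim2 : ∀ x : Fin k → ℂ, F (fun j => a * x j) = a ^ t * F x := by
      set q : (Fin k → ℂ) → ℂ := fun x =>
        MvPolynomial.eval (fun j => a * x j) P - a ^ t * a ^ N * MvPolynomial.eval x P with hqdef
      have hqa : AnalyticOnNhd ℂ q Set.univ := by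
        have hL : AnalyticOnNhd ℂ (fun x : Fin k → ℂ => (fun j => a * x j)) Set.univ := by
          intro x _
          have := ((a • ContinuousLinearMap.id ℂ (Fin k → ℂ)) :
            (Fin k → ℂ) →L[ℂ] (Fin k → ℂ)).analyticAt x
          convert this using 2
          ext j; simp
        have h1 : AnalyticOnNhd ℂ
            (fun x : Fin k → ℂ => MvPolynomial.eval (fun j => a * x j) P) Set.univ := by
          have := (mvpoly_analytic P).comp hL (Set.mapsTo_univ _ _)
          exact this
        intro x _
        exact ((h1 x trivial).sub (analyticAt_const.mul ((mvpoly_analytic P) x trivial)))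
      have hqW : ∀ x ∈ W, q x = 0 := by
        rintro x ⟨hx1, hx2, hxD⟩
        have e1 := claim1 x hx1 hx2
        rw [hFval x, hFval (fun j => a * x j), hDscale a x] at e1
        have haN : (a : ℂ) ^ N ≠ 0 := pow_ne_zero _ ha
        have hne : (a : ℂ) ^ N * D x ≠ 0 := mul_ne_zero haN hxD
        rw [div_eq_iff hne] at e1
        have h3 : a ^ t * (MvPolynomial.eval x P / D x) * ((a:ℂ) ^ N * D x)
            = a ^ t * a ^ N * MvPolynomial.eval x P := by
          field_simp
        rw [h3] at e1
        simp only [hqdef]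
        rw [e1, sub_self]
      have hq0 := zero_ext q hqa W hWopen x₀ hx₀W hqW
      intro x
      by_cases hDx : D x = 0
      · have hDax : D (fun j => a * x j) = 0 := by rw [hDscale, hDx, mul_zero]
        rw [hFval, hFval, hDax, hDx, div_zero, div_zero, mul_zero]
      · have hqx := hq0 x
        simp only [hqdef, sub_eq_zero] at hqx
        rw [hFval, hFval, hDscale, hqx]
        have haN : (a : ℂ) ^ N ≠ 0 := pow_ne_zero _ ha
        field_simp
    -- Step 3: the residue formulas
    have hYz := hYdef v' hgd v k is ms F hF z hz
    have hYaz := hYdef v' hgd v k is ms F hF (a * z) (mul_ne_zero ha hz)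
    obtain ⟨ρ₁, hρ₁, hY₁⟩ := hYz
    obtain ⟨ρ₂, hρ₂, hY₂⟩ := hYaz
    have habs : (0:ℝ) < ‖a‖ := norm_pos_iff.mpr ha
    set δ : ℝ := min (‖a‖ * ρ₁) ρ₂ with hδdef
    have hδ : 0 < δ := lt_min (by positivity) hρ₂
    set rr : Fin k → ℝ := fun j => (δ / 2) * (2:ℝ)⁻¹ ^ (j : ℕ) with hrrdef
    have hrrpos : ∀ j, 0 < rr j := fun j => by positivity
    have hrrle : ∀ j, rr j ≤ δ / 2 := by
      intro j
      have h5 : ((2:ℝ)⁻¹) ^ (j : ℕ) ≤ 1 := pow_le_one₀ (by norm_num) (by norm_num)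
      simp only [hrrdef]
      nlinarith [hδ, h5]
    have hrrdec : ∀ p q : Fin k, p < q → rr q < rr p := by
      intro p q hpq
      have : ((2:ℝ)⁻¹) ^ (q : ℕ) < (2:ℝ)⁻¹ ^ (p : ℕ) :=
        pow_lt_pow_right_of_lt_one₀ (by norm_num) (by norm_num) (Fin.lt_def.mp hpq)
      simp only [hrrdef]
      nlinarith [hδ]
    have hrrρ₂ : ∀ j, rr j < ρ₂ := by
      intro j
      have h1 := hrrle j
      have h2 : δ ≤ ρ₂ := min_le_right _ _
      linarith
    have hscpos : ∀ j, 0 < ‖a⁻¹‖ * rr j := by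
      intro j
      have : ‖a⁻¹‖ = ‖a‖⁻¹ := norm_inv _
      rw [this]
      positivity
    have hscdec : ∀ p q : Fin k, p < q → ‖a⁻¹‖ * rr q < ‖a⁻¹‖ * rr p := by
      intro p q hpq
      have h1 : (0:ℝ) < ‖a⁻¹‖ := by
        rw [norm_inv]
        positivity
      exact mul_lt_mul_of_pos_left (hrrdec p q hpq) h1
    have hscρ₁ : ∀ j, ‖a⁻¹‖ * rr j < ρ₁ := by
      intro j
      rw [norm_inv]
      rw [inv_mul_lt_iff₀ habs]
      have h1 := hrrle j
      have h2 : δ ≤ ‖a‖ * ρ₁ := min_le_left _ _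
      linarith
    have eq2 := hY₂ rr hrrpos hrrdec hrrρ₂
    have eq1 := hY₁ (fun j => ‖a⁻¹‖ * rr j) hscpos hscdec hscρ₁
    -- Step 4: change of variables in the iterated residue
    set M : ℤ := ∑ j, ms j with hMdef
    have hpoint : ∀ ξ : Fin k → ℂ,
        (∏ j, ξ j ^ ms j) * F (fun j => ξ j + a * z)
          = a ^ (M + t) * ((fun η : Fin k → ℂ => (∏ j, η j ^ ms j) * F (fun j => η j + z))
              (fun j => a⁻¹ * ξ j)) := by
      intro ξ
      have hFpart : F (fun j => ξ j + a * z) = a ^ t * F (fun j => a⁻¹ * ξ j + z) := by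
        have h := claim2 (fun j => a⁻¹ * ξ j + z)
        have he : (fun j => a * ((fun j => a⁻¹ * ξ j + z) j)) = (fun j => ξ j + a * z) := by
          funext j
          field_simp
        rw [he] at h
        exact h
      have hprod : (∏ j, ξ j ^ ms j) = a ^ M * ∏ j, (a⁻¹ * ξ j) ^ ms j := by
        have h1 : ∀ j ∈ Finset.univ, (ξ j : ℂ) ^ ms j
            = a ^ ms j * (a⁻¹ * ξ j) ^ ms j := by
          intro j _
          rw [← mul_zpow]
          congr 1
          field_simp
        rw [Finset.prod_congr rfl h1, Finset.prod_mul_distrib, prod_zpow_eq a ha, hMdef]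
      rw [hFpart, hprod, zpow_add₀ ha]
      ring
    have hstep : pairQ v' (Y (a * z) (monApply c (List.ofFn fun j => (is j, ms j)) vac) v)
        = a ^ (M + t) * ((a⁻¹)⁻¹ ^ k *
          iterRes k (fun η : Fin k → ℂ => (∏ j, η j ^ ms j) * F (fun j => η j + z))
            (fun j => ‖a⁻¹‖ * rr j)) := by
      rw [eq2]
      calc iterRes k (fun ξ => (∏ j, ξ j ^ ms j) * F (fun j => ξ j + a * z)) rr
          = iterRes k (fun ξ => a ^ (M + t) *
              ((fun η : Fin k → ℂ => (∏ j, η j ^ ms j) * F (fun j => η j + z))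
                (fun j => a⁻¹ * ξ j))) rr := iterRes_congr _ _ _ _ hpoint
        _ = a ^ (M + t) * iterRes k (fun ξ =>
              (fun η : Fin k → ℂ => (∏ j, η j ^ ms j) * F (fun j => η j + z))
                (fun j => a⁻¹ * ξ j)) rr := iterRes_const_mul _ _ _ _
        _ = a ^ (M + t) * ((a⁻¹)⁻¹ ^ k *
              iterRes k (fun η : Fin k → ℂ => (∏ j, η j ^ ms j) * F (fun j => η j + z))
                (fun j => ‖a⁻¹‖ * rr j)) := by
            rw [iterRes_scale a⁻¹ k
              (fun η : Fin k → ℂ => (∏ j, η j ^ ms j) * F (fun j => η j + z)) rr]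
    rw [hstep, ← eq1]
    -- Step 5: the scalar bookkeeping
    have hlhs : a ^ (d : ℂ) * (a ^ (m : ℂ))⁻¹ = a ^ ((∑ j, wt (is j)) + t : ℤ) := by
      rw [← Complex.cpow_neg, ← Complex.cpow_add _ _ ha]
      have hde : (d : ℂ) + -(m : ℂ) = (((∑ j, wt (is j)) + t : ℤ) : ℂ) := by
        have h1 : (((∑ j, wt (is j)) + t : ℤ) : ℚ) = d - m := by
          push_cast
          linarith [ht]
        have h2 := congrArg (fun x : ℚ => (x : ℂ)) h1
        push_cast at h2 ⊢
        linear_combination -h2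
      rw [hde]
      rw [Complex.cpow_intCast]
    have hexp : (∑ j, (wt (is j) - ms j - 1)) + (M + t) + (k : ℤ) = (∑ j, wt (is j)) + t := by
      have h1 : ∑ j, (wt (is j) - ms j - 1) = (∑ j, wt (is j)) - (∑ j, ms j) - k := by
        rw [Finset.sum_sub_distrib, Finset.sum_sub_distrib]
        simp [Finset.card_univ]
      rw [h1, hMdef]
      ring
    rw [hlhs, inv_inv]
    rw [show (a : ℂ) ^ k = a ^ (k : ℤ) from (zpow_natCast a k).symm]
    rw [← hexp]
    rw [zpow_add₀ ha, zpow_add₀ ha]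
    ring
  · have hzero : ∀ n : Fin k → ℤ,
        v' (monApply c (List.ofFn fun j => (is j, n j)) v) = 0 := by
      intro n
      by_contra hvn
      apply hT
      refine ⟨∑ j, (-(n j) - 1), ?_⟩
      have h1 := hdn n hvn
      have h2 := hsplit n
      push_cast
      linarith [h1, h2]
    have hFU : ∀ x : Fin k → ℂ, (∀ p q : Fin k, p < q → ‖x q‖ < ‖x p‖) →
        (∀ j, x j ≠ 0) → F x = 0 := by
      intro x h1 h2
      obtain ⟨_, hs⟩ := hFsum x h1 h2
      rw [← hs]
      have hterm : ∀ n : Fin k → ℤ,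
          v' (monApply c (List.ofFn fun j => (is j, n j)) v) *
            ∏ j, (x j) ^ (-(n j) - 1 : ℤ) = (0:ℂ) := fun n => by rw [hzero n, zero_mul]
      calc (∑' n : Fin k → ℤ, v' (monApply c (List.ofFn fun j => (is j, n j)) v) *
              ∏ j, (x j) ^ (-(n j) - 1 : ℤ))
          = ∑' _ : Fin k → ℤ, (0:ℂ) := tsum_congr hterm
        _ = 0 := tsum_zero
    have hP : ∀ x, MvPolynomial.eval x P = 0 := by
      apply zero_ext _ (mvpoly_analytic P) W hWopen x₀ hx₀W
      rintro x ⟨h1, h2, hxD⟩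
      have hx := hFU x h1 h2
      rw [hFval x] at hx
      exact (div_eq_zero_iff.mp hx).resolve_right hxD
    have hFzero : ∀ x, F x = 0 := fun x => by rw [hFval x, hP x, zero_div]
    obtain ⟨ρ₁, hρ₁, hY₁⟩ := hYdef v' hgd v k is ms F hF z hz
    obtain ⟨ρ₂, hρ₂, hY₂⟩ := hYdef v' hgd v k is ms F hF (a * z) (mul_ne_zero ha hz)
    set δ : ℝ := min ρ₁ ρ₂ with hδdef
    have hδ : 0 < δ := lt_min hρ₁ hρ₂
    set rr : Fin k → ℝ := fun j => (δ / 2) * (2:ℝ)⁻¹ ^ (j : ℕ) with hrrdef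
    have hrrpos : ∀ j, 0 < rr j := fun j => by positivity
    have hrrdec : ∀ p q : Fin k, p < q → rr q < rr p := by
      intro p q hpq
      have h5 : ((2:ℝ)⁻¹) ^ (q : ℕ) < (2:ℝ)⁻¹ ^ (p : ℕ) :=
        pow_lt_pow_right_of_lt_one₀ (by norm_num) (by norm_num) (Fin.lt_def.mp hpq)
      simp only [hrrdef]
      nlinarith [hδ, h5]
    have hrrlt : ∀ ρ : ℝ, δ ≤ ρ → ∀ j, rr j < ρ := by
      intro ρ hρ j
      have h5 : ((2:ℝ)⁻¹) ^ (j : ℕ) ≤ 1 := pow_le_one₀ (by norm_num) (by norm_num)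
      simp only [hrrdef]
      nlinarith [hδ, h5]
    have eq1 := hY₁ rr hrrpos hrrdec (hrrlt ρ₁ (min_le_left _ _))
    have eq2 := hY₂ rr hrrpos hrrdec (hrrlt ρ₂ (min_le_right _ _))
    have hzz : ∀ w : ℂ,
        iterRes k (fun ξ => (∏ j, ξ j ^ ms j) * F (fun j => ξ j + w)) rr = 0 := by
      intro w
      rw [iterRes_congr k _ (fun _ => (0:ℂ)) rr (fun ξ => by rw [hFzero, mul_zero]),
        iterRes_zero]
    rw [eq1, eq2, hzz z, hzz (a * z), mul_zero, mul_zero]
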